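/- Let h(u) = (1/(2π))·(√(1 − u²) + (π − arccos u)·u) on [−1, 1]. Then (i) h'(u) = (π − arccos u)/(2π) > 0 for all u ∈ (−1, 1), and (ii) u·h''(u) < h'(u) for all u ∈ (−1, 1/√2], where h''(u) = 1/(2π√(1 − u²)). -/

import Mathlib

open Real

noncomputable def hrelu (u : ℝ) : ℝ :=
  (1 / (2 * π)) * (Real.sqrt (1 - u ^ 2) + (π - Real.arccos u) * u)

lemma sq_lt_one_of_mem {u : ℝ} (hu : u ∈ Set.Ioo (-1 : ℝ) 1) : 0 < 1 - u ^ 2 := by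
  nlinarith [hu.1, hu.2]

lemma arccos_lt_pi' {u : ℝ} (hu : -1 < u) : Real.arccos u < π := by
  rw [Real.arccos]
  have := Real.neg_pi_div_two_lt_arcsin.mpr hu
  linarith

lemma hasDerivAt_hrelu {u : ℝ} (hu : u ∈ Set.Ioo (-1 : ℝ) 1) :
    HasDerivAt hrelu ((π - Real.arccos u) / (2 * π)) u := by
  have hpos : 0 < 1 - u ^ 2 := sq_lt_one_of_mem hu
  have hs : 0 < Real.sqrt (1 - u ^ 2) := Real.sqrt_pos.mpr hpos
  have h1 : HasDerivAt (fun u : ℝ => 1 - u ^ 2) (-(2 * u)) u := by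
    simpa using ((hasDerivAt_pow 2 u).const_sub 1)
  have hsqrt : HasDerivAt (fun u : ℝ => Real.sqrt (1 - u ^ 2))
      (1 / (2 * Real.sqrt (1 - u ^ 2)) * (-(2 * u))) u :=
    (Real.hasDerivAt_sqrt hpos.ne').comp u h1
  have harccos : HasDerivAt (fun u : ℝ => (π - Real.arccos u) * u)
      ((-(-(1 / Real.sqrt (1 - u ^ 2)))) * u + (π - Real.arccos u) * 1) u :=
    (((Real.hasDerivAt_arccos (x := u) (by linarith [hu.1]) (by linarith [hu.2])).const_sub π)).mul
      (hasDerivAt_id u)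
  have := (hsqrt.add harccos).const_mul (1 / (2 * π))
  refine this.congr_deriv ?_
  field_simp
  ring

lemma hasDerivAt_g {u : ℝ} (hu : u ∈ Set.Ioo (-1 : ℝ) 1) :
    HasDerivAt (fun u => (π - Real.arccos u) / (2 * π))
      (1 / (2 * π * Real.sqrt (1 - u ^ 2))) u := by
  have hs : 0 < Real.sqrt (1 - u ^ 2) := Real.sqrt_pos.mpr (sq_lt_one_of_mem hu)
  have h := ((Real.hasDerivAt_arccos (x := u) (by linarith [hu.1])
    (by linarith [hu.2])).const_sub π).div_const (2 * π)
  refine h.congr_deriv ?_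
  field_simp

lemma mem_Ioo_of_Ioc {u : ℝ} (hu : u ∈ Set.Ioc (-1 : ℝ) (1 / Real.sqrt 2)) :
    u ∈ Set.Ioo (-1 : ℝ) 1 := by
  refine ⟨hu.1, lt_of_le_of_lt hu.2 ?_⟩
  rw [div_lt_one (by positivity)]
  nlinarith [Real.sq_sqrt (by norm_num : (2:ℝ) ≥ 0), Real.sqrt_nonneg 2]

/-- (i) `h'(u) = (π − arccos u)/(2π) > 0` on `(−1, 1)`;
(ii) `u·h''(u) < h'(u)` on `(−1, 1/√2]`, where `h''(u) = 1/(2π√(1−u²))`. -/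
theorem hrelu_derivative_properties :
    (∀ u ∈ Set.Ioo (-1 : ℝ) 1,
      deriv hrelu u = (π - Real.arccos u) / (2 * π) ∧ 0 < deriv hrelu u) ∧
    (∀ u ∈ Set.Ioc (-1 : ℝ) (1 / Real.sqrt 2),
      deriv (deriv hrelu) u = 1 / (2 * π * Real.sqrt (1 - u ^ 2)) ∧
      u * deriv (deriv hrelu) u < deriv hrelu u) := by
  have hd1 : ∀ u ∈ Set.Ioo (-1 : ℝ) 1, deriv hrelu u = (π - Real.arccos u) / (2 * π) :=
    fun u hu => (hasDerivAt_hrelu hu).deriv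
  have hpos : ∀ u ∈ Set.Ioo (-1 : ℝ) 1, 0 < (π - Real.arccos u) / (2 * π) := by
    intro u hu
    have h1 : Real.arccos u < π := arccos_lt_pi' hu.1
    have h2 := Real.pi_pos
    apply div_pos (by linarith) (by linarith)
  constructor
  · exact fun u hu => ⟨hd1 u hu, (hd1 u hu) ▸ hpos u hu⟩
  · intro u hu
    have hu' := mem_Ioo_of_Ioc hu
    have heq : deriv hrelu =ᶠ[nhds u] (fun u => (π - Real.arccos u) / (2 * π)) := by
      filter_upwards [isOpen_Ioo.mem_nhds hu'] with v hv using hd1 v hv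
    have hd2 : deriv (deriv hrelu) u = 1 / (2 * π * Real.sqrt (1 - u ^ 2)) := by
      rw [heq.deriv_eq]; exact (hasDerivAt_g hu').deriv
    refine ⟨hd2, ?_⟩
    rw [hd2, hd1 u hu']
    have hs : 0 < Real.sqrt (1 - u ^ 2) := Real.sqrt_pos.mpr (sq_lt_one_of_mem hu')
    have hπ := Real.pi_pos
    have key : u / Real.sqrt (1 - u ^ 2) < π - Real.arccos u := by
      rcases le_or_gt u 0 with h0 | h0
      · have h1 : u / Real.sqrt (1 - u ^ 2) ≤ 0 := div_nonpos_of_nonpos_of_nonneg h0 hs.le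
        have h2 : Real.arccos u < π := arccos_lt_pi' hu'.1
        linarith
      · have h2 : u ≤ Real.sqrt (1 - u ^ 2) := by
          have hsq : u ^ 2 ≤ 1 - u ^ 2 := by
            have h22 : u ≤ 1 / Real.sqrt 2 := hu.2
            have hs2 : (0:ℝ) < Real.sqrt 2 := by positivity
            have h3 : u * Real.sqrt 2 ≤ 1 := by
              rwa [le_div_iff₀ hs2] at h22
            nlinarith [Real.sq_sqrt (by norm_num : (2:ℝ) ≥ 0)]
          calc u = Real.sqrt (u ^ 2) := by rw [Real.sqrt_sq h0.le]
          _ ≤ Real.sqrt (1 - u ^ 2) := Real.sqrt_le_sqrt hsq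
        have hle1 : u / Real.sqrt (1 - u ^ 2) ≤ 1 := (div_le_one hs).mpr h2
        have harc : Real.arccos u < π / 2 := Real.arccos_lt_pi_div_two.mpr h0
        have h4 : (1:ℝ) < π / 2 := by nlinarith [Real.pi_gt_three]
        linarith
    calc u * (1 / (2 * π * Real.sqrt (1 - u ^ 2)))
        = (u / Real.sqrt (1 - u ^ 2)) / (2 * π) := by
          field_simp
      _ < (π - Real.arccos u) / (2 * π) := by
          exact div_lt_div_of_pos_right key (by positivity)
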